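/- Fix reals S_A>0, θ>0, λ with 0<λ≤λ_th, an integer B≥1, a prior variance V∈(0,1], and an integer t̂ with 0 ≤ t̂ ≤ t*, where by convention v_th(λ,−1) := 0. If v_th(λ,t̂−1) < V < v_th(λ,t̂), then, setting t° := min{t̂, B} and S_M° := max(1/√(λθ) − 1/V, 0)·S_A·V/(1+t°·S_A·V), the pair (t°, S_M°) is a global minimizer of F over {0,1,…,B}×[0,∞). -/

import Mathlib

/-- Posterior variance update: `ν̂(V,Λ) = V/(1+V·Λ)`. -/
noncomputable def nuhat (V Lam : ℝ) : ℝ := V / (1 + V * Lam)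

/-- Coordinated myopic cost `F(t,S_M)`. -/
noncomputable def Fcoord (SA th lam V : ℝ) (t : ℕ) (SM : ℝ) : ℝ :=
  nuhat V ((t : ℝ) * SA * SM / (SA + SM)) + lam * (t : ℝ) * (1 + th * SM)

/-- The threshold `v_th(λ,t)`. -/
noncomputable def vth (SA th lam : ℝ) (t : ℕ) : ℝ :=
  (Real.sqrt (lam * th) + lam * ((t : ℝ) + 1 / 2) +
      Real.sqrt lam *
        Real.sqrt (Real.sqrt (lam * th) * (2 * (t : ℝ) + 1) +
          lam * th * ((t : ℝ) + 1) * (t : ℝ) * SA + lam / 4 + 1 / SA)) /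
    (1 - lam * ((t : ℝ) + 1) * (t : ℝ) * SA)

/-- Auxiliary: the value of the coordinated cost at the per-`t` optimal sensing SNR. -/
noncomputable def Gaux (SA lam V s T : ℝ) : ℝ :=
  V * (1 + s * T * SA) ^ 2 / (1 + V * T * SA) + lam * T - s ^ 2 * T * SA

lemma inner_bound (SA lam V s T L : ℝ) (hV : 0 < V) (hL0 : 0 ≤ L) (hL1 : L < T * SA) :
    Gaux SA lam V s T ≤ V / (1 + V * L) + lam * T + s ^ 2 * T * SA * L / (T * SA - L) := by
  have hTSA : 0 < T * SA := lt_of_le_of_lt hL0 hL1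
  have h1 : 0 < 1 + V * L := by positivity
  have h2 : 0 < T * SA - L := sub_pos.2 hL1
  have h3 : 0 < 1 + V * (T * SA) := by positivity
  have h3' : 0 < 1 + V * T * SA := by rw [← mul_assoc] at h3; exact h3
  rw [← sub_nonneg]
  have key : V / (1 + V * L) + lam * T + s ^ 2 * T * SA * L / (T * SA - L) - Gaux SA lam V s T
      = (V * (T * SA - L) - s * T * SA * (1 + V * L)) ^ 2
        / ((1 + V * L) * (T * SA - L) * (1 + V * T * SA)) := by
    unfold Gaux
    field_simp
    ring
  rw [key]; positivity

lemma diff_formula (SA lam V s T : ℝ) (hSA : SA ≠ 0) (h1 : (1 + V * T * SA) ≠ 0)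
    (h2 : (1 + V * (T + 1) * SA) ≠ 0) :
    Gaux SA lam V s (T + 1) - Gaux SA lam V s T =
      SA * (-(1 - lam * (T + 1) * T * SA) * V ^ 2 + 2 * (s + lam * (T + 1 / 2)) * V
        + (lam / SA - s ^ 2)) / ((1 + V * T * SA) * (1 + V * (T + 1) * SA)) := by
  unfold Gaux
  field_simp
  ring

lemma convex_formula (SA lam V s T : ℝ) (h0 : (1 + V * T * SA) ≠ 0)
    (h1 : (1 + V * (T + 1) * SA) ≠ 0) (h2 : (1 + V * (T + 2) * SA) ≠ 0) :
    Gaux SA lam V s T + Gaux SA lam V s (T + 2) - 2 * Gaux SA lam V s (T + 1) =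
      2 * V * (V * SA - s * SA) ^ 2
        / ((1 + V * T * SA) * (1 + V * (T + 1) * SA) * (1 + V * (T + 2) * SA)) := by
  unfold Gaux
  generalize ha : 1 + V * T * SA = a at *
  generalize hb : 1 + V * (T + 1) * SA = b at *
  generalize hc : 1 + V * (T + 2) * SA = c at *
  field_simp
  rw [← ha, ← hb, ← hc]
  ring

lemma attain (SA lam V s T SMc : ℝ) (hSA : 0 < SA) (hV : 0 < V) (hs : 0 < s)
    (hVs : s < V) (hT : 0 ≤ T)
    (hSMc : SMc = (1 / s - 1 / V) * SA * V / (1 + T * SA * V)) :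
    V / (1 + V * (T * SA * SMc / (SA + SMc))) + lam * T + s ^ 2 * T * SMc
      = Gaux SA lam V s T := by
  have hden : 0 < 1 + T * SA * V := by positivity
  have hd4 : 0 < 1 + V * T * SA := by positivity
  have hd5 : 0 < 1 + s * T * SA := by positivity
  have hSMc' : SMc = SA * (V - s) / (s * (1 + T * SA * V)) := by
    rw [hSMc]; field_simp
  have hc : 0 ≤ 1 / s - 1 / V := by
    have := one_div_le_one_div_of_le hs hVs.le
    linarith
  have hSMc0 : 0 ≤ SMc := by rw [hSMc]; positivity
  have hden2 : 0 < SA + SMc := by positivity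
  have hL : T * SA * SMc / (SA + SMc) = T * SA * (V - s) / (V * (1 + s * T * SA)) := by
    rw [div_eq_div_iff hden2.ne' (by positivity)]
    rw [hSMc']
    field_simp
    ring
  rw [hL]
  have hA : 1 + V * (T * SA * (V - s) / (V * (1 + s * T * SA)))
      = (1 + V * T * SA) / (1 + s * T * SA) := by
    field_simp
    ring
  rw [hA]
  have hB : s ^ 2 * T * SMc = s * (T * SA * (V - s)) / (1 + V * T * SA) := by
    rw [hSMc']
    field_simp
  rw [hB, div_div_eq_mul_div]
  unfold Gaux
  field_simp
  ring

lemma QQ_pos (SA lam s V x : ℝ) (hSA : 0 < SA) (hlam : 0 < lam) (hs : 0 ≤ s)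
    (hx : 0 ≤ x) (hsV : s < V)
    (hD : lam * (x + 1) * x * SA < 1)
    (hV : V < (s + lam * (x + 1 / 2) +
        Real.sqrt lam * Real.sqrt (s * (2 * x + 1) + s ^ 2 * (x + 1) * x * SA
          + lam / 4 + 1 / SA)) / (1 - lam * (x + 1) * x * SA)) :
    0 ≤ -(1 - lam * (x + 1) * x * SA) * V ^ 2 + 2 * (s + lam * (x + 1 / 2)) * V
      + (lam / SA - s ^ 2) := by
  set n : ℝ := lam / SA - s ^ 2 with hndef
  set D : ℝ := 1 - lam * (x + 1) * x * SA with hDdef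
  have hD0 : 0 < D := by rw [hDdef]; linarith
  set m : ℝ := s + lam * (x + 1 / 2) with hmdef
  set R : ℝ := s * (2 * x + 1) + s ^ 2 * (x + 1) * x * SA + lam / 4 + 1 / SA with hRdef
  have hR0 : 0 < R := by
    have h1 : 0 ≤ s * (2 * x + 1) := by positivity
    have h2 : 0 ≤ s ^ 2 * (x + 1) * x * SA := by positivity
    have h3 : 0 < lam / 4 := by positivity
    have h4 : 0 < 1 / SA := by positivity
    rw [hRdef]; linarith
  set r : ℝ := Real.sqrt lam * Real.sqrt R with hrdef
  have hr0 : 0 ≤ r := by positivity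
  have hr2 : r ^ 2 = lam * R := by
    rw [hrdef, mul_pow, Real.sq_sqrt hlam.le, Real.sq_sqrt hR0.le]
  have hI5 : lam * R = m ^ 2 + D * n := by
    rw [hRdef, hmdef, hDdef, hndef]
    field_simp
    ring
  have h1 : D * V - m < r := by
    have := (lt_div_iff₀ hD0).1 hV
    linarith [this]
  have hQs : 0 < -D * s ^ 2 + 2 * m * s + n := by
    have key : -D * s ^ 2 + 2 * m * s + n
        = lam * s ^ 2 * (x + 1) * x * SA + lam * (2 * x + 1) * s + lam / SA := by
      rw [hDdef, hmdef, hndef]; ring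
    rw [key]
    have : 0 < lam / SA := by positivity
    have h2 : 0 ≤ lam * s ^ 2 * (x + 1) * x * SA := by positivity
    have h3 : 0 ≤ lam * (2 * x + 1) * s := by positivity
    linarith
  have hms : (m - D * s) ^ 2 < r ^ 2 := by
    have key : r ^ 2 - (m - D * s) ^ 2 = D * (-D * s ^ 2 + 2 * m * s + n) := by
      rw [hr2]; linear_combination hI5
    linarith [mul_pos hD0 hQs, key]
  have hmds : m - D * s < r := lt_of_pow_lt_pow_left₀ 2 hr0 hms
  have h2 : -r < D * V - m := by
    have hDV : D * s < D * V := (mul_lt_mul_iff_right₀ hD0).2 hsV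
    linarith
  have h3 : (D * V - m) ^ 2 < lam * R := by
    rw [← hr2]; exact sq_lt_sq' h2 h1
  set QQ : ℝ := -D * V ^ 2 + 2 * m * V + n with hQQdef
  have key2 : D * QQ = lam * R - (D * V - m) ^ 2 := by
    rw [hQQdef]; linear_combination hI5 - (2*lam^2*x + 2*lam^2*x^2) * (mul_inv_cancel₀ hSA.ne')
  by_contra hcon
  push_neg at hcon
  have : D * QQ < 0 := mul_neg_of_pos_of_neg hD0 (by linarith)
  linarith

lemma QQ_neg (SA lam s V x : ℝ) (hSA : 0 < SA) (hlam : 0 < lam) (hs : 0 ≤ s)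
    (hx : 0 ≤ x) (hV0 : 0 < V)
    (hD : lam * (x + 1) * x * SA < 1)
    (hV : (s + lam * (x + 1 / 2) +
        Real.sqrt lam * Real.sqrt (s * (2 * x + 1) + s ^ 2 * (x + 1) * x * SA
          + lam / 4 + 1 / SA)) / (1 - lam * (x + 1) * x * SA) < V) :
    -(1 - lam * (x + 1) * x * SA) * V ^ 2 + 2 * (s + lam * (x + 1 / 2)) * V
      + (lam / SA - s ^ 2) ≤ 0 := by
  set n : ℝ := lam / SA - s ^ 2 with hndef
  set D : ℝ := 1 - lam * (x + 1) * x * SA with hDdef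
  have hD0 : 0 < D := by rw [hDdef]; linarith
  set m : ℝ := s + lam * (x + 1 / 2) with hmdef
  set R : ℝ := s * (2 * x + 1) + s ^ 2 * (x + 1) * x * SA + lam / 4 + 1 / SA with hRdef
  have hR0 : 0 < R := by
    have h1 : 0 ≤ s * (2 * x + 1) := by positivity
    have h2 : 0 ≤ s ^ 2 * (x + 1) * x * SA := by positivity
    have h3 : 0 < lam / 4 := by positivity
    have h4 : 0 < 1 / SA := by positivity
    rw [hRdef]; linarith
  set r : ℝ := Real.sqrt lam * Real.sqrt R with hrdef
  have hr0 : 0 ≤ r := by positivity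
  have hr2 : r ^ 2 = lam * R := by
    rw [hrdef, mul_pow, Real.sq_sqrt hlam.le, Real.sq_sqrt hR0.le]
  have hI5 : lam * R = m ^ 2 + D * n := by
    rw [hRdef, hmdef, hDdef, hndef]
    field_simp
    ring
  have h1 : r < D * V - m := by
    have := (div_lt_iff₀ hD0).1 hV
    linarith [this]
  have h3 : lam * R < (D * V - m) ^ 2 := by
    rw [← hr2]; exact pow_lt_pow_left₀ h1 hr0 (by norm_num)
  set QQ : ℝ := -D * V ^ 2 + 2 * m * V + n with hQQdef
  have key2 : D * QQ = lam * R - (D * V - m) ^ 2 := by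
    rw [hQQdef]; linear_combination hI5 - (2*lam^2*x + 2*lam^2*x^2) * (mul_inv_cancel₀ hSA.ne')
  by_contra hcon
  push_neg at hcon
  have : 0 < D * QQ := mul_pos hD0 hcon
  linarith

/-- The discrete minimization of `Gaux` over `{0,…,B}` in the case `s < V`. -/
lemma Gaux_min (SA lam V : ℝ) (hSA : 0 < SA) (hlam : 0 < lam) (hV0 : 0 < V)
    (B : ℕ)
    (tstar : ℕ)
    (htstar1 : lam * (tstar : ℝ) * ((tstar : ℝ) + 1) * SA < 1)
    (that : ℕ) (hthat : that ≤ tstar)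
    (tcirc : ℕ) (htcirc : tcirc = min that B)
    (s : ℝ) (hs0 : 0 < s)
    (hVs : s < V)
    (hright : V < (s + lam * ((that:ℝ) + 1 / 2) +
        Real.sqrt lam * Real.sqrt (s * (2 * (that:ℝ) + 1) + s ^ 2 * ((that:ℝ) + 1) * (that:ℝ) * SA
          + lam / 4 + 1 / SA)) / (1 - lam * ((that:ℝ) + 1) * (that:ℝ) * SA))
    (hleft : that ≠ 0 → (s + lam * (((that-1:ℕ):ℝ) + 1 / 2) +
        Real.sqrt lam * Real.sqrt (s * (2 * ((that-1:ℕ):ℝ) + 1)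
          + s ^ 2 * (((that-1:ℕ):ℝ) + 1) * ((that-1:ℕ):ℝ) * SA
          + lam / 4 + 1 / SA)) / (1 - lam * (((that-1:ℕ):ℝ) + 1) * ((that-1:ℕ):ℝ) * SA) < V) :
    ∀ t : ℕ, t ≤ B → Gaux SA lam V s (tcirc : ℝ) ≤ Gaux SA lam V s (t : ℝ) := by
  have hq : ∀ y : ℝ, 0 ≤ y → 0 < 1 + V * y * SA := by
    intro y hy; positivity
  set G : ℕ → ℝ := fun j => Gaux SA lam V s (j:ℝ) with hGdef
  have hcast1 : ∀ j : ℕ, ((j+1:ℕ):ℝ) = (j:ℝ) + 1 := by intro j; push_cast; ring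
  have hcast2 : ∀ j : ℕ, ((j+2:ℕ):ℝ) = (j:ℝ) + 2 := by intro j; push_cast; ring
  set Dd : ℕ → ℝ := fun j => G (j+1) - G j with hDdef
  have hstep : ∀ j : ℕ, Dd j ≤ Dd (j+1) := by
    intro j
    have h0 := hq (j:ℝ) (Nat.cast_nonneg j)
    have h1 := hq ((j:ℝ)+1) (by positivity)
    have h2 := hq ((j:ℝ)+2) (by positivity)
    have hc := convex_formula SA lam V s (j:ℝ) h0.ne' h1.ne' h2.ne'
    have hpos : 0 ≤ 2 * V * (V * SA - s * SA) ^ 2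
        / ((1 + V * (j:ℝ) * SA) * (1 + V * ((j:ℝ) + 1) * SA) * (1 + V * ((j:ℝ) + 2) * SA)) := by
      positivity
    simp only [hDdef, hGdef, hcast1, hcast2]
    have e2 : Gaux SA lam V s ((j:ℝ)+1+1) = Gaux SA lam V s ((j:ℝ)+2) := by congr 1; ring
    linarith [hc, hpos, e2]
  have hmono : ∀ i j : ℕ, i ≤ j → Dd i ≤ Dd j := by
    intro i j hij
    induction j, hij using Nat.le_induction with
    | base => exact le_rfl
    | succ k hk ih => exact le_trans ih (hstep k)
  have hcth : ((that:ℕ):ℝ) ≤ (tstar:ℝ) := by exact_mod_cast hthat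
  have hDlt : ∀ x : ℝ, 0 ≤ x → x ≤ (tstar:ℝ) → lam * (x + 1) * x * SA < 1 := by
    intro x hx hxle
    have h1 : 0 ≤ lam * SA * (((tstar:ℝ) - x) * ((tstar:ℝ) + x + 1)) := by
      have : 0 ≤ (tstar:ℝ) - x := by linarith
      have h2 : 0 ≤ (tstar:ℝ) + x + 1 := by positivity
      positivity
    nlinarith [htstar1]
  have hinc : ∀ j : ℕ, that ≤ j → G j ≤ G (j+1) := by
    intro j hj
    have hDd : 0 ≤ Dd that := by
      have h0 := hq (that:ℝ) (Nat.cast_nonneg that)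
      have h1 := hq ((that:ℝ)+1) (by positivity)
      have hD := hDlt (that:ℝ) (Nat.cast_nonneg that) hcth
      have hQ := QQ_pos SA lam s V (that:ℝ) hSA hlam hs0.le (Nat.cast_nonneg that) hVs hD hright
      have hd := diff_formula SA lam V s (that:ℝ) hSA.ne' h0.ne' h1.ne'
      have : 0 ≤ SA * (-(1 - lam * ((that:ℝ) + 1) * (that:ℝ) * SA) * V ^ 2
          + 2 * (s + lam * ((that:ℝ) + 1 / 2)) * V + (lam / SA - s ^ 2))
          / ((1 + V * (that:ℝ) * SA) * (1 + V * ((that:ℝ) + 1) * SA)) := by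
        apply div_nonneg (mul_nonneg hSA.le hQ) (by positivity)
      simp only [hDdef, hGdef, hcast1]
      linarith [hd, this]
    have h5 := hmono that j hj
    simp only [hDdef] at h5 hDd ⊢
    linarith [hDd, h5]
  have hdec : ∀ j : ℕ, j < that → G (j+1) ≤ G j := by
    intro j hj
    have hne : that ≠ 0 := by omega
    have hDd : Dd (that - 1) ≤ 0 := by
      set x : ℝ := ((that - 1:ℕ):ℝ) with hxdef
      have hx0 : 0 ≤ x := Nat.cast_nonneg _
      have hxle : x ≤ (tstar:ℝ) := by
        have : (that - 1 : ℕ) ≤ tstar := le_trans (Nat.sub_le _ _) hthat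
        rw [hxdef]; exact_mod_cast this
      have h0 := hq x hx0
      have h1 := hq (x+1) (by positivity)
      have hD := hDlt x hx0 hxle
      have hQ := QQ_neg SA lam s V x hSA hlam hs0.le hx0 hV0 hD (hleft hne)
      have hd := diff_formula SA lam V s x hSA.ne' h0.ne' h1.ne'
      have hnum : SA * (-(1 - lam * (x + 1) * x * SA) * V ^ 2
          + 2 * (s + lam * (x + 1 / 2)) * V + (lam / SA - s ^ 2))
          / ((1 + V * x * SA) * (1 + V * (x + 1) * SA)) ≤ 0 := by
        apply div_nonpos_of_nonpos_of_nonneg (mul_nonpos_of_nonneg_of_nonpos hSA.le hQ)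
          (by positivity)
      have hc3 : ((that - 1 + 1:ℕ):ℝ) = x + 1 := by rw [hcast1]
      simp only [hDdef, hGdef, hc3]
      linarith [hd, hnum]
    have hle2 : Dd j ≤ Dd (that - 1) := hmono j (that - 1) (by omega)
    simp only [hDdef] at hle2 hDd ⊢
    linarith [hle2, hDd]
  have hanti : ∀ a b : ℕ, a ≤ b → b ≤ that → G b ≤ G a := by
    intro a b hab
    induction b, hab using Nat.le_induction with
    | base => intro _; exact le_rfl
    | succ k hk ih =>
      intro hk1
      exact le_trans (hdec k (by omega)) (ih (by omega))
  have hmonoG : ∀ a b : ℕ, a ≤ b → that ≤ a → G a ≤ G b := by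
    intro a b hab
    induction b, hab using Nat.le_induction with
    | base => intro _; exact le_rfl
    | succ k hk ih =>
      intro ha
      exact le_trans (ih ha) (hinc k (by omega))
  intro t ht
  rcases le_or_gt t tcirc with hcase | hcase
  · exact hanti t tcirc hcase (by omega)
  · have : that ≤ tcirc := by omega
    exact hmonoG tcirc t hcase.le this

set_option maxHeartbeats 1600000 in
/-- if `v_th(λ,t̂−1) < V < v_th(λ,t̂)` (with `v_th(λ,−1) := 0`)
for some `0 ≤ t̂ ≤ t*`, then `(min{t̂,B}, S_M°)` globally minimizes the
coordinated myopic cost over `{0,…,B}×[0,∞)`. -/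
theorem stmt_4 (SA th lam V lamth : ℝ) (hSA : 0 < SA) (hth : 0 < th)
    (hlam : 0 < lam)
    (hlamth : lamth = 1 / (Real.sqrt (1 + 1 / SA) + Real.sqrt th) ^ 2)
    (hle : lam ≤ lamth)
    (B : ℕ) (hB : 1 ≤ B) (hV0 : 0 < V) (hV1 : V ≤ 1)
    (tstar : ℕ)
    (htstar1 : lam * (tstar : ℝ) * ((tstar : ℝ) + 1) * SA < 1)
    (htstar2 : ∀ t : ℕ, lam * (t : ℝ) * ((t : ℝ) + 1) * SA < 1 → t ≤ tstar)
    (that : ℕ) (hthat : that ≤ tstar)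
    (hleft : (if that = 0 then (0 : ℝ) else vth SA th lam (that - 1)) < V)
    (hright : V < vth SA th lam that)
    (tcirc : ℕ) (htcirc : tcirc = min that B)
    (SMcirc : ℝ)
    (hSMcirc : SMcirc =
      max (1 / Real.sqrt (lam * th) - 1 / V) 0 * SA * V / (1 + (tcirc : ℝ) * SA * V)) :
    ∀ t : ℕ, t ≤ B → ∀ SM : ℝ, 0 ≤ SM →
      Fcoord SA th lam V t SM ≥ Fcoord SA th lam V tcirc SMcirc := by
  have hlt : 0 < lam * th := mul_pos hlam hth
  set s : ℝ := Real.sqrt (lam * th) with hsdef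
  have hs0 : 0 < s := by rw [hsdef]; exact Real.sqrt_pos.2 hlt
  have hs2 : s ^ 2 = lam * th := by rw [hsdef]; exact Real.sq_sqrt hlt.le
  -- convert the threshold hypotheses into `s`-form
  simp only [vth] at hright
  rw [← hsdef, ← hs2] at hright
  have hleft' : that ≠ 0 → (s + lam * (((that-1:ℕ):ℝ) + 1 / 2) +
      Real.sqrt lam * Real.sqrt (s * (2 * ((that-1:ℕ):ℝ) + 1)
        + s ^ 2 * (((that-1:ℕ):ℝ) + 1) * ((that-1:ℕ):ℝ) * SA
        + lam / 4 + 1 / SA)) / (1 - lam * (((that-1:ℕ):ℝ) + 1) * ((that-1:ℕ):ℝ) * SA) < V := by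
    intro hne
    have h := hleft
    rw [if_neg hne] at h
    simp only [vth] at h
    rw [← hsdef, ← hs2] at h
    exact h
  -- the general lower bound `Gaux ≤ Fcoord`
  have lower : ∀ (k : ℕ) (S : ℝ), 0 ≤ S → Gaux SA lam V s (k:ℝ) ≤ Fcoord SA th lam V k S := by
    intro k S hS
    simp only [Fcoord, nuhat]
    rcases Nat.eq_zero_or_pos k with hk | hk
    · subst hk
      norm_num [Gaux]
    · have hT : (0:ℝ) < (k:ℝ) := by exact_mod_cast hk
      have hdenS : 0 < SA + S := by linarith
      set T := (k:ℝ) with hTdef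
      set L := T * SA * S / (SA + S) with hLdef
      have hL0 : 0 ≤ L := by
        apply div_nonneg _ hdenS.le
        positivity
      have hsub : T * SA - L = T * SA * SA / (SA + S) := by
        rw [hLdef]; field_simp; ring
      have hL1 : L < T * SA := by
        rw [← sub_pos, hsub]; positivity
      have h2 : (0:ℝ) < T * SA - L := sub_pos.2 hL1
      have hSMeq : S * (T * SA - L) = SA * L := by
        rw [hLdef]; field_simp; ring
      have hterm : s ^ 2 * T * SA * L / (T * SA - L) = lam * T * (th * S) := by
        rw [div_eq_iff h2.ne']
        linear_combination (T*SA*L) * hs2 - lam * th * T * hSMeq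
      have hIB := inner_bound SA lam V s T L hV0 hL0 hL1
      have hexp : lam * T * (1 + th * S) = lam * T + lam * T * (th * S) := by ring
      rw [hexp]
      linarith [hIB, hterm.le, hterm.ge]
  intro t htB SM hSM
  rcases le_or_gt V s with hVs | hVs
  · -- case `V ≤ s`: here `t̂ = 0`, `S_M° = 0`, and `F ≥ V` directly.
    have hthat0 : that = 0 := by
      by_contra hne
      have h := hleft' hne
      set x : ℝ := ((that-1:ℕ):ℝ) with hxdef
      have hx0 : 0 ≤ x := Nat.cast_nonneg _
      have hxle : x ≤ (tstar:ℝ) := by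
        have : (that - 1 : ℕ) ≤ tstar := le_trans (Nat.sub_le _ _) hthat
        rw [hxdef]; exact_mod_cast this
      have hD : lam * (x + 1) * x * SA < 1 := by
        have h1 : 0 ≤ lam * SA * (((tstar:ℝ) - x) * ((tstar:ℝ) + x + 1)) := by
          have : 0 ≤ (tstar:ℝ) - x := by linarith
          have h2 : 0 ≤ (tstar:ℝ) + x + 1 := by positivity
          positivity
        nlinarith [htstar1]
      have hD0 : 0 < 1 - lam * (x + 1) * x * SA := by linarith
      have hden1 : 1 - lam * (x + 1) * x * SA ≤ 1 := by
        have hnn : 0 ≤ lam * (x + 1) * x * SA := by positivity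
        linarith
      have hsqrt : 0 ≤ Real.sqrt lam * Real.sqrt (s * (2 * x + 1)
          + s ^ 2 * (x + 1) * x * SA + lam / 4 + 1 / SA) := by positivity
      have hlamx : 0 < lam * (x + 1 / 2) := by positivity
      set num : ℝ := s + lam * (x + 1 / 2) +
        Real.sqrt lam * Real.sqrt (s * (2 * x + 1)
          + s ^ 2 * (x + 1) * x * SA + lam / 4 + 1 / SA) with hnumdef
      have hnum0 : s < num := by rw [hnumdef]; linarith
      have hfrac : num ≤ num / (1 - lam * (x + 1) * x * SA) := by
        rw [le_div_iff₀ hD0]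
        nlinarith [hnum0, hs0, hden1]
      linarith [h, hnum0, hfrac, hVs]
    have htcirc0 : tcirc = 0 := by omega
    have hSM0 : SMcirc = 0 := by
      have hmax : max (1 / s - 1 / V) 0 = 0 := by
        apply max_eq_right
        have := one_div_le_one_div_of_le hV0 hVs
        linarith
      rw [hSMcirc, hmax]
      simp
    rw [ge_iff_le, htcirc0, hSM0]
    have hF0 : Fcoord SA th lam V 0 0 = V := by simp [Fcoord, nuhat]
    rw [hF0]
    simp only [Fcoord, nuhat]
    rcases Nat.eq_zero_or_pos t with ht0 | ht0
    · subst ht0; simp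
    · have hT : (0:ℝ) < (t:ℝ) := by exact_mod_cast ht0
      have hdenS : 0 < SA + SM := by linarith
      set L := (t:ℝ) * SA * SM / (SA + SM) with hLdef
      have hL0 : 0 ≤ L := by
        apply div_nonneg _ hdenS.le
        positivity
      have h1 : 0 < 1 + V * L := by positivity
      have key1 : V - V^2 * L ≤ V / (1 + V * L) := by
        rw [← sub_nonneg]
        have e : V / (1 + V * L) - (V - V^2 * L) = V^3 * L^2 / (1 + V * L) := by
          field_simp; ring
        rw [e]; positivity
      have hV2 : V^2 ≤ lam * th := by nlinarith [hs2, hVs, hV0, hs0]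
      have key2 : V^2 * L ≤ lam * (t:ℝ) * (1 + th * SM) := by
        have e2 : V^2 * L * (SA + SM) = V^2 * ((t:ℝ) * SA * SM) := by
          rw [hLdef]; field_simp
        have h3 : V^2 * ((t:ℝ) * SA * SM) ≤ lam * th * ((t:ℝ) * SA * SM) :=
          mul_le_mul_of_nonneg_right hV2 (by positivity)
        have h4 : lam * th * ((t:ℝ) * SA * SM) ≤ lam * (t:ℝ) * (1 + th * SM) * (SA + SM) := by
          nlinarith [mul_pos (mul_pos hlam hT) hSA,
            mul_nonneg (mul_nonneg hlam.le hT.le) hSM,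
            mul_nonneg (mul_nonneg (mul_nonneg hlam.le hT.le) hth.le) (mul_nonneg hSM hSM)]
        have h5 : V^2 * L * (SA + SM) ≤ lam * (t:ℝ) * (1 + th * SM) * (SA + SM) := by
          linarith [e2, h3, h4]
        exact le_of_mul_le_mul_right h5 hdenS
      linarith [key1, key2]
  · -- case `s < V`
    have hGmin := Gaux_min SA lam V hSA hlam hV0 B tstar htstar1 that hthat tcirc htcirc
      s hs0 hVs hright hleft'
    have hmax : max (1 / s - 1 / V) 0 = 1 / s - 1 / V := by
      apply max_eq_left
      have := one_div_le_one_div_of_le hs0 hVs.le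
      linarith
    have hSMc' : SMcirc = (1 / s - 1 / V) * SA * V / (1 + (tcirc:ℝ) * SA * V) := by
      rw [hSMcirc, hmax]
    have hatt := attain SA lam V s (tcirc:ℝ) SMcirc hSA hV0 hs0 hVs (Nat.cast_nonneg _) hSMc'
    have hFc : Fcoord SA th lam V tcirc SMcirc = Gaux SA lam V s (tcirc:ℝ) := by
      simp only [Fcoord, nuhat]
      rw [← hatt]
      have hthS : lam * (tcirc:ℝ) * (1 + th * SMcirc)
          = lam * (tcirc:ℝ) + s ^ 2 * (tcirc:ℝ) * SMcirc := by
        linear_combination (-((tcirc:ℝ) * SMcirc)) * hs2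
      linarith [hthS]
    rw [ge_iff_le, hFc]
    exact le_trans (hGmin t htB) (lower t SM hSM)
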